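/- (Dependent random choice for 3-graphs.) Let a, m, n, r be positive integers and let H be an n-vertex 3-graph. If there exists a positive integer t such that n^{1−2t}·δ₁(H)^t − C(n,r)·(2m/(n(n−1)))^t ≥ a, then there exists a subset U ⊆ V(H) of size |U| ≥ a having the property that e(L_H(S)) ≥ m for every S ∈ binom(U, r). -/
import Mathlib


open Finset Filter

attribute [local instance] Classical.propDecidable

/-- A hypergraph: a finite vertex set and a finite edge set (edges are finite
vertex sets; for 3-graphs all edges have three elements). -/
structure H3 where
  verts : Finset ℕ
  edges : Finset (Finset ℕ)

/-- The subhypergraph relation. -/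
def H3.Sub (F H : H3) : Prop :=
  F.verts ⊆ H.verts ∧ F.edges ⊆ H.edges ∧ ∀ e ∈ F.edges, e ⊆ F.verts

/-- The density `d₃` of a 3-graph. -/
noncomputable def d3 (F : H3) : ℝ :=
  if F.edges.card = 0 then 0
  else if F.edges.card = 1 ∧ F.verts.card = 3 then 1 / 3
  else ((F.edges.card : ℝ) - 1) / ((F.verts.card : ℝ) - 3)

/-- The maximal 3-density `m₃`. -/
noncomputable def m3 (H : H3) : ℝ :=
  sSup {x : ℝ | ∃ F : H3, F.Sub H ∧ x = d3 F}

/-- The asymmetric maximal 3-density `m₃(H₁,H₂)`. -/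
noncomputable def m3Asym (H1 H2 : H3) : ℝ :=
  sSup {x : ℝ | ∃ F : H3, F.Sub H1 ∧ 1 ≤ F.edges.card ∧
    x = (F.edges.card : ℝ) / ((F.verts.card : ℝ) - 3 + 1 / m3 H2)}

/-- The maximum subhypergraph density `m(H)`. -/
noncomputable def mDen (H : H3) : ℝ :=
  sSup {x : ℝ | ∃ F : H3, F.Sub H ∧ 1 ≤ F.verts.card ∧
    x = (F.edges.card : ℝ) / (F.verts.card : ℝ)}

/-- The canonical linear 3-clique `K̃_t`: branch vertices `0,…,t-1`; the pair
`(i,j)` with `i<j<t` gets the apex vertex `t + (C(j,2) + i)`, and the map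
`(i,j) ↦ C(j,2) + i` is a bijection onto `[0, C(t,2))`. -/
noncomputable def linClique (t : ℕ) : H3 where
  verts := Finset.range (t + t.choose 2)
  edges := ((Finset.range t ×ˢ Finset.range t).filter fun p => p.1 < p.2).image
    fun p => {p.1, p.2, t + (p.2.choose 2 + p.1)}

/-- `v(K̃_t)`. -/
def vOf (t : ℕ) : ℕ := t + t.choose 2

/-- `(cV, cE)` is a copy of the hypergraph `F` (an isomorphic image of `F`). -/
def IsCopy3 (F : H3) (cV : Finset ℕ) (cE : Finset (Finset ℕ)) : Prop :=
  ∃ φ : ℕ → ℕ, Set.InjOn φ ↑F.verts ∧ cV = F.verts.image φ ∧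
    cE = F.edges.image fun e => e.image φ

/-- The edge set `E` contains a copy of the hypergraph `F`. -/
def ContainsCopy (F : H3) (E : Finset (Finset ℕ)) : Prop :=
  ∃ cV cE, IsCopy3 F cV cE ∧ cE ⊆ E

/-- The edge set `E` induced on `U` contains a copy of the hypergraph `F`. -/
def ContainsCopyWithin (F : H3) (E : Finset (Finset ℕ)) (U : Finset ℕ) : Prop :=
  ∃ cV cE, IsCopy3 F cV cE ∧ cV ⊆ U ∧ cE ⊆ E

/-- The probability that the binomial random 3-graph `ℍ(n,p)` satisfies `P`. -/
noncomputable def PrH (n : ℕ) (p : ℝ) (P : Finset (Finset ℕ) → Prop) : ℝ :=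
  ∑ R ∈ ((Finset.range n).powersetCard 3).powerset,
    if P R then p ^ R.card * (1 - p) ^ (((Finset.range n).powersetCard 3).card - R.card)
    else 0

/-- `E → (F)₂` : every 2-colouring of `E` yields a monochromatic copy of `F`. -/
def Arrow2 (E : Finset (Finset ℕ)) (F : H3) : Prop :=
  ∀ χ : Finset ℕ → Bool, ∃ c : Bool, ContainsCopy F (E.filter fun e => χ e = c)

/-- `E → (F, F')` : every red/blue colouring of `E` yields a red copy of `F`
or a blue copy of `F'`. -/
def ArrowAsym (E : Finset (Finset ℕ)) (F F' : H3) : Prop :=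
  ∀ χ : Finset ℕ → Bool,
    ContainsCopy F (E.filter fun e => χ e = true) ∨
    ContainsCopy F' (E.filter fun e => χ e = false)

/-- `H` is `(F,F')`-Ramsey with respect to `(𝓕,𝓕')`. -/
def RamseyWrt (E : Finset (Finset ℕ)) (F F' : H3) (𝓕 𝓕' : Finset (Finset ℕ)) : Prop :=
  ∀ χ : Finset ℕ → Bool,
    (∃ cV cE, IsCopy3 F cV cE ∧ cE ⊆ E.filter (fun e => χ e = true) ∧ cV ∉ 𝓕) ∨
    (∃ cV cE, IsCopy3 F' cV cE ∧ cE ⊆ E.filter (fun e => χ e = false) ∧ cV ∉ 𝓕')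

/-- The complete bipartite graph between `X` and `Y`, as a set of pairs. -/
noncomputable def K2 (X Y : Finset ℕ) : Finset (Finset ℕ) :=
  (X ×ˢ Y).image fun p => ({p.1, p.2} : Finset ℕ)

/-- `e_G(X,Y)` : the number of edges of `G` with one endpoint in `X` and one in `Y`. -/
noncomputable def e2 (G : Finset (Finset ℕ)) (X Y : Finset ℕ) : ℕ :=
  (G.filter fun e => ∃ x ∈ X, ∃ y ∈ Y, e = {x, y}).card

/-- The graph `G` is `(δ,d)`-regular between `X` and `Y`. -/
def BipRegular (δ d : ℝ) (G : Finset (Finset ℕ)) (X Y : Finset ℕ) : Prop :=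
  ∀ X' ⊆ X, ∀ Y' ⊆ Y,
    |(e2 G X' Y' : ℝ) - d * X'.card * Y'.card| ≤ δ * X.card * Y.card

/-- `e_H(X,Y,Z)` : the number of edges of the 3-graph `E` meeting `X`, `Y` and `Z`. -/
noncomputable def e3 (E : Finset (Finset ℕ)) (X Y Z : Finset ℕ) : ℕ :=
  (E.filter fun e => ∃ x ∈ X, ∃ y ∈ Y, ∃ z ∈ Z, e = {x, y, z}).card

/-- The 3-graph `E` is `(δ,d)`-weakly-regular on `(X,Y,Z)`. -/
def WeakRegularWith (δ d : ℝ) (E : Finset (Finset ℕ)) (X Y Z : Finset ℕ) : Prop :=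
  ∀ X' ⊆ X, ∀ Y' ⊆ Y, ∀ Z' ⊆ Z,
    |(e3 E X' Y' Z' : ℝ) - d * X'.card * Y'.card * Z'.card| ≤
      δ * X.card * Y.card * Z.card

/-- The 3-graph `E` is `δ`-weakly-regular on `(X,Y,Z)`. -/
def WeakRegular (δ : ℝ) (E : Finset (Finset ℕ)) (X Y Z : Finset ℕ) : Prop :=
  WeakRegularWith δ ((e3 E X Y Z : ℝ) / (X.card * Y.card * Z.card)) E X Y Z

/-- The 3-graph `E` is `δ`-weakly-regular with respect to the vertex partition `V`. -/
def WeakRegWrt (δ : ℝ) (E : Finset (Finset ℕ)) {t : ℕ} (V : Fin t → Finset ℕ) : Prop :=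
  let bad : Finset (Fin t × Fin t × Fin t) :=
    Finset.univ.filter fun x =>
      x.1 < x.2.1 ∧ x.2.1 < x.2.2 ∧ ¬ WeakRegular δ E (V x.1) (V x.2.1) (V x.2.2)
  (bad.card : ℝ) ≤ δ * (t.choose 3)

/-- `K_3(G)` on parts `(X,Y,Z)` : the triangles of `G` with one vertex in each part,
as a set of vertex triples. -/
noncomputable def triSets (G : Finset (Finset ℕ)) (X Y Z : Finset ℕ) : Finset (Finset ℕ) :=
  ((X ×ˢ Y ×ˢ Z).filter fun p =>
      ({p.1, p.2.1} : Finset ℕ) ∈ G ∧ ({p.1, p.2.2} : Finset ℕ) ∈ G ∧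
        ({p.2.1, p.2.2} : Finset ℕ) ∈ G).image fun p => ({p.1, p.2.1, p.2.2} : Finset ℕ)

/-- The relative density `d(E|P)` of a 3-graph `E` with respect to the tripartite
graph `P` on parts `(X,Y,Z)`. -/
noncomputable def relDen (E P : Finset (Finset ℕ)) (X Y Z : Finset ℕ) : ℝ :=
  ((E ∩ triSets P X Y Z).card : ℝ) / ((triSets P X Y Z).card : ℝ)

/-- The 3-graph `E` is `(δ,d,r)`-regular with respect to the tripartite graph `P`
on parts `(X,Y,Z)`. -/
def StrongRegular (δ d : ℝ) (r : ℕ) (E P : Finset (Finset ℕ)) (X Y Z : Finset ℕ) : Prop :=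
  ∀ Q : Fin r → Finset (Finset ℕ), (∀ i, Q i ⊆ P) →
    δ * ((triSets P X Y Z).card : ℝ)
        ≤ (((Finset.univ : Finset (Fin r)).biUnion fun i => triSets (Q i) X Y Z).card : ℝ) →
    0 < δ * ((triSets P X Y Z).card : ℝ) →
    |((E ∩ ((Finset.univ : Finset (Fin r)).biUnion fun i => triSets (Q i) X Y Z)).card : ℝ)
        - d * (((Finset.univ : Finset (Fin r)).biUnion fun i => triSets (Q i) X Y Z).card : ℝ)|
      ≤ δ * ((triSets P X Y Z).card : ℝ)

/-- The triad `B^{ijk}_{αβγ}` of a family of bipartite graphs. -/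
def triadG {t ℓ : ℕ} (B : Fin t → Fin t → Fin ℓ → Finset (Finset ℕ))
    (i j k : Fin t) (α β γ : Fin ℓ) : Finset (Finset ℕ) :=
  B i j α ∪ B i k β ∪ B j k γ

/-- The 3-graph `E` is `(δ,r)`-regular with respect to the partition `B` of the
pairs crossing the vertex partition `V` of `[n]`. -/
def StrongRegWrtB (δ : ℝ) (r : ℕ) (E : Finset (Finset ℕ)) {t ℓ : ℕ}
    (V : Fin t → Finset ℕ) (B : Fin t → Fin t → Fin ℓ → Finset (Finset ℕ)) (n : ℕ) : Prop :=
  let bad : Finset ((Fin t × Fin t × Fin t) × Fin ℓ × Fin ℓ × Fin ℓ) :=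
    Finset.univ.filter fun x =>
      x.1.1 < x.1.2.1 ∧ x.1.2.1 < x.1.2.2 ∧
        ¬ StrongRegular δ
          (relDen E (triadG B x.1.1 x.1.2.1 x.1.2.2 x.2.1 x.2.2.1 x.2.2.2)
            (V x.1.1) (V x.1.2.1) (V x.1.2.2))
          r E (triadG B x.1.1 x.1.2.1 x.1.2.2 x.2.1 x.2.2.1 x.2.2.2)
          (V x.1.1) (V x.1.2.1) (V x.1.2.2)
  ((bad.biUnion fun x =>
      triSets (triadG B x.1.1 x.1.2.1 x.1.2.2 x.2.1 x.2.2.1 x.2.2.2)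
        (V x.1.1) (V x.1.2.1) (V x.1.2.2)).card : ℝ) ≤ δ * (n : ℝ) ^ 3

/-- The joint link graph `⋂_{j} L_H(x_j, P)` of a tuple `x`, supported on the
bipartite part of `P` between `Y` and `Z`. -/
noncomputable def jointLink (EH P : Finset (Finset ℕ)) (Y Z : Finset ℕ) {t : ℕ}
    (x : Fin t → ℕ) : Finset (Finset ℕ) :=
  P.filter fun e => (∃ y ∈ Y, ∃ z ∈ Z, e = {y, z}) ∧ ∀ j : Fin t, insert (x j) e ∈ EH

/-- The joint link graph `L_H(X) = ⋂_{x ∈ X} L_H(x)` of a set `X` of vertices of a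
3-graph on `[n]`. -/
noncomputable def jointLinkSet (n : ℕ) (E : Finset (Finset ℕ)) (X : Finset ℕ) :
    Finset (Finset ℕ) :=
  ((Finset.range n).powersetCard 2).filter fun q => ∀ x ∈ X, insert x q ∈ E

/-- The complete tripartite 3-graph on parts `V1`, `V2`, `V3`. -/
noncomputable def tripartiteEdges (V1 V2 V3 : Finset ℕ) : Finset (Finset ℕ) :=
  (V1 ×ˢ V2 ×ˢ V3).image fun p => ({p.1, p.2.1, p.2.2} : Finset ℕ)

/-- The minimum 1-degree `δ₁` of a 3-graph on `[n]`. -/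
noncomputable def minDeg1 (n : ℕ) (E : Finset (Finset ℕ)) : ℕ :=
  if h : ((Finset.range n).image fun v => (E.filter fun e => v ∈ e).card).Nonempty then
    ((Finset.range n).image fun v => (E.filter fun e => v ∈ e).card).min' h
  else 0

/-- `(cV, cE)` is a copy of the graph `(KV, KE)` (an isomorphic image). -/
def IsCopy2 (KV : Finset ℕ) (KE : Finset (Finset ℕ))
    (cV : Finset ℕ) (cE : Finset (Finset ℕ)) : Prop :=
  ∃ φ : ℕ → ℕ, Set.InjOn φ ↑KV ∧ cV = KV.image φ ∧ cE = KE.image fun e => e.image φ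

private lemma drc_count {α : Type*} (t : ℕ) (P : Finset (Finset ℕ)) (X : Finset α)
    (A : α → Finset (Finset ℕ)) (hA : ∀ x ∈ X, A x ⊆ P) :
    ∑ p ∈ Fintype.piFinset (fun _ : Fin t => P),
      (X.filter fun x => ∀ i, p i ∈ A x).card
      = ∑ x ∈ X, (A x).card ^ t := by
  have h1 : ∀ p : Fin t → Finset ℕ, (X.filter fun x => ∀ i, p i ∈ A x).card
      = ∑ x ∈ X, if (∀ i, p i ∈ A x) then 1 else 0 := fun p => Finset.card_filter _ _
  simp_rw [h1]
  rw [Finset.sum_comm]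
  refine Finset.sum_congr rfl fun x hx => ?_
  rw [← Finset.card_filter]
  have h2 : (Fintype.piFinset (fun _ : Fin t => P)).filter (fun p => ∀ i, p i ∈ A x)
      = Fintype.piFinset (fun _ : Fin t => A x) := by
    ext p
    simp only [Finset.mem_filter, Fintype.mem_piFinset]
    exact ⟨fun h => h.2, fun h => ⟨fun i => hA x hx (h i), h⟩⟩
  rw [h2, Fintype.card_piFinset]
  simp

private lemma link_card_eq (n : ℕ) (E : Finset (Finset ℕ))
    (hE : ∀ e ∈ E, e ⊆ Finset.range n ∧ e.card = 3) (x : ℕ) :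
    (E.filter fun e => x ∈ e).card = (jointLinkSet n E {x}).card := by
  refine Finset.card_bij' (fun e _ => e.erase x) (fun q _ => insert x q) ?_ ?_ ?_ ?_
  · intro e he
    rw [Finset.mem_filter] at he
    obtain ⟨heE, hxe⟩ := he
    obtain ⟨hsub, hcard⟩ := hE e heE
    rw [jointLinkSet, Finset.mem_filter, Finset.mem_powersetCard]
    refine ⟨⟨(Finset.erase_subset x e).trans hsub, ?_⟩, ?_⟩
    · rw [Finset.card_erase_of_mem hxe, hcard]
    · intro y hy
      rw [Finset.mem_singleton] at hy
      subst hy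
      rwa [Finset.insert_erase hxe]
  · intro q hq
    rw [jointLinkSet, Finset.mem_filter] at hq
    rw [Finset.mem_filter]
    exact ⟨hq.2 x (Finset.mem_singleton_self x), Finset.mem_insert_self x q⟩
  · intro e he
    rw [Finset.mem_filter] at he
    exact Finset.insert_erase he.2
  · intro q hq
    rw [jointLinkSet, Finset.mem_filter, Finset.mem_powersetCard] at hq
    have hxq : x ∉ q := by
      intro hx
      have h1 : insert x q = q := Finset.insert_eq_self.mpr hx
      have h2 := hq.2 x (Finset.mem_singleton_self x)
      rw [h1] at h2
      have := (hE q h2).2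
      rw [hq.1.2] at this
      omega
    exact Finset.erase_insert hxq

private lemma minDeg1_le (n : ℕ) (E : Finset (Finset ℕ)) {x : ℕ}
    (hx : x ∈ Finset.range n) :
    minDeg1 n E ≤ (E.filter fun e => x ∈ e).card := by
  have hne : ((Finset.range n).image fun v => (E.filter fun e => v ∈ e).card).Nonempty :=
    ⟨_, Finset.mem_image_of_mem _ hx⟩
  rw [minDeg1, dif_pos hne]
  exact Finset.min'_le _ _ (Finset.mem_image_of_mem _ hx)

private noncomputable def pickVert (S : Finset ℕ) : ℕ :=
  if h : S.Nonempty then h.choose else 0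

private lemma pickVert_mem {S : Finset ℕ} (h : S.Nonempty) : pickVert S ∈ S := by
  rw [pickVert, dif_pos h]
  exact h.choose_spec

/-- (Dependent random choice for 3-graphs.) -/
theorem dependent_random_choice (a m n r : ℕ) (ha : 0 < a) (hm : 0 < m) (hn : 0 < n)
    (hr : 0 < r) (E : Finset (Finset ℕ))
    (hE : ∀ e ∈ E, e ⊆ Finset.range n ∧ e.card = 3)
    (ht : ∃ t : ℕ, 0 < t ∧
      (a : ℝ) ≤ (n : ℝ) ^ ((1 : ℝ) - 2 * (t : ℝ)) * (minDeg1 n E : ℝ) ^ t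
        - (n.choose r : ℝ) * (2 * (m : ℝ) / ((n : ℝ) * ((n : ℝ) - 1))) ^ t) :
    ∃ U ⊆ Finset.range n, a ≤ U.card ∧
      ∀ S ∈ U.powersetCard r, m ≤ (jointLinkSet n E S).card := by
  obtain ⟨t, ht0, hbound⟩ := ht
  by_cases hn2 : n < 2
  · -- n = 1 : the hypothesis is contradictory
    exfalso
    have hn1 : n = 1 := by omega
    subst hn1
    have hE0 : E = ∅ := Finset.eq_empty_of_forall_notMem fun e he => by
      obtain ⟨h1, h2⟩ := hE e he
      have := Finset.card_le_card h1
      rw [h2, Finset.card_range] at this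
      omega
    subst hE0
    have hδ0 : minDeg1 1 (∅ : Finset (Finset ℕ)) = 0 := by
      have h := minDeg1_le 1 (∅ : Finset (Finset ℕ)) (x := 0) (by simp)
      simpa using h
    rw [hδ0] at hbound
    have h1 : ((1:ℕ):ℝ) * (((1:ℕ):ℝ) - 1) = 0 := by norm_num
    rw [h1] at hbound
    simp [ht0.ne', div_zero] at hbound
    have : (0:ℝ) < (a:ℝ) := by exact_mod_cast ha
    linarith
  · push_neg at hn2
    set δ := minDeg1 n E with hδdef
    set P := (Finset.range n).powersetCard 2 with hPdef
    set T := Fintype.piFinset (fun _ : Fin t => P) with hTdef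
    -- counting identities
    have count1 : ∑ p ∈ T, ((Finset.range n).filter
          fun x => ∀ i, p i ∈ jointLinkSet n E {x}).card
        = ∑ x ∈ Finset.range n, (jointLinkSet n E {x}).card ^ t :=
      drc_count t P (Finset.range n) _ (fun x _ => Finset.filter_subset _ _)
    set Bad := ((Finset.range n).powersetCard r).filter
      (fun S => (jointLinkSet n E S).card < m) with hBadDef
    have count2 : ∑ p ∈ T, (Bad.filter fun S => ∀ i, p i ∈ jointLinkSet n E S).card
        = ∑ S ∈ Bad, (jointLinkSet n E S).card ^ t :=
      drc_count t P Bad _ (fun S _ => Finset.filter_subset _ _)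
    -- numeric bounds
    have hB : ∑ S ∈ Bad, (jointLinkSet n E S).card ^ t ≤ n.choose r * m ^ t := by
      calc ∑ S ∈ Bad, (jointLinkSet n E S).card ^ t
          ≤ ∑ _S ∈ Bad, m ^ t := Finset.sum_le_sum fun S hS =>
            Nat.pow_le_pow_left (le_of_lt (Finset.mem_filter.mp hS).2) t
        _ = Bad.card * m ^ t := by rw [Finset.sum_const, smul_eq_mul]
        _ ≤ n.choose r * m ^ t := by
            have : Bad.card ≤ n.choose r := by
              have h := Finset.card_le_card (Finset.filter_subset
                (fun S => (jointLinkSet n E S).card < m)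
                ((Finset.range n).powersetCard r))
              rwa [Finset.card_powersetCard, Finset.card_range] at h
            exact Nat.mul_le_mul_right _ this
    have hU : n * δ ^ t ≤ ∑ x ∈ Finset.range n, (jointLinkSet n E {x}).card ^ t := by
      have h : ∀ x ∈ Finset.range n, δ ^ t ≤ (jointLinkSet n E {x}).card ^ t :=
        fun x hx => Nat.pow_le_pow_left
          ((minDeg1_le n E hx).trans_eq (link_card_eq n E hE x)) t
      calc n * δ ^ t = ∑ _x ∈ Finset.range n, δ ^ t := by
            rw [Finset.sum_const, smul_eq_mul, Finset.card_range]
        _ ≤ _ := Finset.sum_le_sum h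
    -- the real-number step
    have hC2 : ((n.choose 2 : ℕ) : ℝ) = (n:ℝ) * ((n:ℝ) - 1) / 2 := Nat.cast_choose_two ℝ n
    have hC2pos : (0:ℝ) < ((n.choose 2 : ℕ) : ℝ) := by
      have : 0 < n.choose 2 := Nat.choose_pos hn2
      exact_mod_cast this
    have hnR : (2:ℝ) ≤ (n:ℝ) := by exact_mod_cast hn2
    have hfrac : 2 * (m:ℝ) / ((n:ℝ) * ((n:ℝ) - 1)) = (m:ℝ) / ((n.choose 2 : ℕ) : ℝ) := by
      rw [hC2]
      rw [div_div_eq_mul_div, div_eq_div_iff (by nlinarith) (by nlinarith)]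
      ring
    rw [hfrac] at hbound
    have hdm : ((m:ℝ) / ((n.choose 2:ℕ):ℝ)) ^ t * ((n.choose 2:ℕ):ℝ) ^ t = (m:ℝ) ^ t := by
      rw [div_pow, div_mul_cancel₀]
      exact pow_ne_zero t hC2pos.ne'
    have key : (a:ℝ) * ((n.choose 2:ℕ):ℝ) ^ t
        ≤ (n:ℝ) ^ ((1:ℝ) - 2*(t:ℝ)) * (δ:ℝ) ^ t * ((n.choose 2:ℕ):ℝ) ^ t
          - ((n.choose r:ℕ):ℝ) * (m:ℝ) ^ t := by
      have h := mul_le_mul_of_nonneg_right hbound (pow_pos hC2pos t).le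
      have expand : ((n:ℝ) ^ ((1:ℝ) - 2*(t:ℝ)) * (δ:ℝ) ^ t
            - ((n.choose r:ℕ):ℝ) * ((m:ℝ) / ((n.choose 2:ℕ):ℝ)) ^ t)
            * ((n.choose 2:ℕ):ℝ) ^ t
          = (n:ℝ) ^ ((1:ℝ) - 2*(t:ℝ)) * (δ:ℝ) ^ t * ((n.choose 2:ℕ):ℝ) ^ t
            - ((n.choose r:ℕ):ℝ) * (m:ℝ) ^ t := by
        rw [sub_mul, mul_assoc ((n.choose r:ℕ):ℝ) (((m:ℝ) / ((n.choose 2:ℕ):ℝ)) ^ t) (((n.choose 2:ℕ):ℝ) ^ t), hdm]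
      rw [expand] at h
      exact h
    have hnpos : (0:ℝ) < (n:ℝ) := by linarith
    have hrpow : (n:ℝ) ^ ((1:ℝ) - 2*(t:ℝ)) * (δ:ℝ) ^ t * ((n.choose 2:ℕ):ℝ) ^ t
        ≤ (n:ℝ) * (δ:ℝ) ^ t := by
      have hle : ((n.choose 2:ℕ):ℝ) ≤ (n:ℝ) ^ 2 := by rw [hC2]; nlinarith
      have h1 : ((n.choose 2:ℕ):ℝ) ^ t ≤ ((n:ℝ) ^ 2) ^ t :=
        pow_le_pow_left₀ hC2pos.le hle t
      have h2 : (n:ℝ) ^ ((1:ℝ) - 2*(t:ℝ)) * ((n:ℝ) ^ 2) ^ t = (n:ℝ) := by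
        rw [← pow_mul, ← Real.rpow_natCast (n:ℝ) (2*t), ← Real.rpow_add hnpos]
        have h3 : (1:ℝ) - 2*(t:ℝ) + ((2*t : ℕ):ℝ) = 1 := by push_cast; ring
        rw [h3, Real.rpow_one]
      have hrnn : (0:ℝ) ≤ (n:ℝ) ^ ((1:ℝ) - 2*(t:ℝ)) := Real.rpow_nonneg hnpos.le _
      calc (n:ℝ) ^ ((1:ℝ) - 2*(t:ℝ)) * (δ:ℝ) ^ t * ((n.choose 2:ℕ):ℝ) ^ t
          = (n:ℝ) ^ ((1:ℝ) - 2*(t:ℝ)) * ((n.choose 2:ℕ):ℝ) ^ t * (δ:ℝ) ^ t := by ring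
        _ ≤ (n:ℝ) ^ ((1:ℝ) - 2*(t:ℝ)) * ((n:ℝ) ^ 2) ^ t * (δ:ℝ) ^ t := by
            have := mul_le_mul_of_nonneg_left h1 hrnn
            exact mul_le_mul_of_nonneg_right this (by positivity)
        _ = (n:ℝ) * (δ:ℝ) ^ t := by rw [h2]
    have hR : (a:ℝ) * ((n.choose 2:ℕ):ℝ) ^ t + ((n.choose r:ℕ):ℝ) * (m:ℝ) ^ t
        ≤ (n:ℝ) * ((δ:ℕ):ℝ) ^ t := by linarith
    have hRn : a * n.choose 2 ^ t + n.choose r * m ^ t ≤ n * δ ^ t := by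
      exact_mod_cast hR
    -- combine in ℕ and choose a good tuple p
    have hT : T.card = n.choose 2 ^ t := by
      rw [hTdef, Fintype.card_piFinset]
      simp [hPdef, Finset.card_powersetCard, Finset.card_range]
    have hmain : ∑ p ∈ T, (a + (Bad.filter fun S => ∀ i, p i ∈ jointLinkSet n E S).card)
        ≤ ∑ p ∈ T, ((Finset.range n).filter
          fun x => ∀ i, p i ∈ jointLinkSet n E {x}).card := by
      rw [Finset.sum_add_distrib, Finset.sum_const, smul_eq_mul, count2, count1]
      calc T.card * a + ∑ S ∈ Bad, (jointLinkSet n E S).card ^ t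
          ≤ a * n.choose 2 ^ t + n.choose r * m ^ t := by
            rw [hT, mul_comm]
            exact Nat.add_le_add_left hB _
        _ ≤ n * δ ^ t := hRn
        _ ≤ _ := hU
    have hTne : T.Nonempty := by
      refine ⟨fun _ => ({0, 1} : Finset ℕ), ?_⟩
      rw [hTdef, Fintype.mem_piFinset]
      intro i
      rw [hPdef, Finset.mem_powersetCard]
      constructor
      · intro y hy
        rw [Finset.mem_insert, Finset.mem_singleton] at hy
        rw [Finset.mem_range]
        rcases hy with h | h <;> subst h <;>
          exact Nat.lt_of_lt_of_le (by norm_num) hn2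
      · rw [Finset.card_insert_of_notMem (by simp), Finset.card_singleton]
    obtain ⟨p, hpT, hp⟩ := Finset.exists_le_of_sum_le hTne hmain
    -- build the set U
    set Up := (Finset.range n).filter (fun x => ∀ i, p i ∈ jointLinkSet n E {x}) with hUpDef
    set BadP := Bad.filter (fun S => ∀ i, p i ∈ jointLinkSet n E S) with hBadPDef
    set D := BadP.image pickVert with hDDef
    refine ⟨Up \ D, ?_, ?_, ?_⟩
    · exact Finset.sdiff_subset.trans (Finset.filter_subset _ _)
    · have h1 : Up.card ≤ (Up \ D).card + D.card := Finset.card_le_card_sdiff_add_card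
      have h2 : D.card ≤ BadP.card := Finset.card_image_le
      exact Nat.le_of_add_le_add_right
        (le_trans hp (le_trans h1 (Nat.add_le_add_left h2 _)))
    · intro S hS
      by_contra hlt
      push_neg at hlt
      rw [Finset.mem_powersetCard] at hS
      obtain ⟨hSU, hScard⟩ := hS
      have hSUp : S ⊆ Up := hSU.trans Finset.sdiff_subset
      have hSBad : S ∈ BadP := by
        rw [hBadPDef, Finset.mem_filter]
        constructor
        · rw [hBadDef, Finset.mem_filter, Finset.mem_powersetCard]
          exact ⟨⟨hSUp.trans (Finset.filter_subset _ _), hScard⟩, hlt⟩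
        · intro i
          rw [jointLinkSet, Finset.mem_filter]
          constructor
          · exact (Fintype.mem_piFinset.mp hpT) i
          · intro x hxS
            have h1 := (Finset.mem_filter.mp (hSUp hxS)).2 i
            rw [jointLinkSet, Finset.mem_filter] at h1
            exact h1.2 x (Finset.mem_singleton_self x)
      have hSne : S.Nonempty := Finset.card_pos.mp (by rw [hScard]; exact hr)
      have hdS : pickVert S ∈ S := pickVert_mem hSne
      have h1 : pickVert S ∈ D := Finset.mem_image_of_mem pickVert hSBad
      have h2 : pickVert S ∈ Up \ D := hSU hdS
      exact (Finset.mem_sdiff.mp h2).2 h1
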